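/- Let x_1, …, x_N ∈ ℝ^d with N ≥ 1, β > 0, and c ∈ ℝ. Define the Hopfield energy E : ℝ^d → ℝ by E(ξ) = ½·⟨ξ, ξ⟩ − β⁻¹·log(∑_{i=1}^N exp(β·⟨x_i, ξ⟩)) + c. Then E is differentiable, its gradient at ξ is ∇E(ξ) = ξ − ∑_{i=1}^N softmax(β·Xᵀξ)_i · x_i, and consequently one gradient-descent step with step size η = 1 yields the Hopfield update rule: ξ − ∇E(ξ) = ∑_{i=1}^N softmax(β·Xᵀξ)_i · x_i. -/

import Mathlib

open scoped RealInnerProductSpace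

theorem hopfield_key (N d : ℕ) (hN : 1 ≤ N) (β : ℝ) (hβ : 0 < β)
    (x : Fin N → EuclideanSpace ℝ (Fin d)) (c : ℝ) (ξ : EuclideanSpace ℝ (Fin d)) :
    HasGradientAt (fun ξ : EuclideanSpace ℝ (Fin d) =>
        (1 / 2) * ⟪ξ, ξ⟫ - β⁻¹ * Real.log (∑ i, Real.exp (β * ⟪x i, ξ⟫)) + c)
      (ξ - ∑ i, (Real.exp (β * ⟪x i, ξ⟫) / ∑ m, Real.exp (β * ⟪x m, ξ⟫)) • x i) ξ := by
  have : Nonempty (Fin N) := ⟨⟨0, hN⟩⟩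
  have hS : 0 < ∑ m, Real.exp (β * ⟪x m, ξ⟫) :=
    Finset.sum_pos (fun i _ => Real.exp_pos _) Finset.univ_nonempty
  have h1 : HasFDerivAt (fun ξ : EuclideanSpace ℝ (Fin d) => ⟪ξ, ξ⟫)
      ((fderivInnerCLM ℝ (ξ, ξ)).comp ((ContinuousLinearMap.id ℝ _).prod
        (ContinuousLinearMap.id ℝ _))) ξ :=
    (hasFDerivAt_id ξ).inner ℝ (hasFDerivAt_id ξ)
  have h2 : ∀ i : Fin N, HasFDerivAt
      (fun ξ : EuclideanSpace ℝ (Fin d) => Real.exp (β * ⟪x i, ξ⟫))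
      (Real.exp (β * ⟪x i, ξ⟫) • (β • innerSL ℝ (x i))) ξ := fun i =>
    (((innerSL ℝ (x i)).hasFDerivAt (x := ξ)).const_mul β).exp
  have hsum : HasFDerivAt (fun ξ : EuclideanSpace ℝ (Fin d) => ∑ i, Real.exp (β * ⟪x i, ξ⟫))
      (∑ i, Real.exp (β * ⟪x i, ξ⟫) • (β • innerSL ℝ (x i))) ξ :=
    HasFDerivAt.fun_sum fun i _ => h2 i
  have hfull := (((h1.const_mul (1 / 2 : ℝ)).sub
    ((hsum.log hS.ne').const_mul β⁻¹)).add_const c)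
  have heq : InnerProductSpace.toDual ℝ (EuclideanSpace ℝ (Fin d))
      (ξ - ∑ i, (Real.exp (β * ⟪x i, ξ⟫) / ∑ m, Real.exp (β * ⟪x m, ξ⟫)) • x i)
      = ((1 / 2 : ℝ) • ((fderivInnerCLM ℝ (ξ, ξ)).comp ((ContinuousLinearMap.id ℝ _).prod
        (ContinuousLinearMap.id ℝ _))) -
        β⁻¹ • ((∑ m, Real.exp (β * ⟪x m, ξ⟫))⁻¹ •
          ∑ i, Real.exp (β * ⟪x i, ξ⟫) • (β • innerSL ℝ (x i)))) := by
    apply ContinuousLinearMap.ext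
    intro v
    simp only [InnerProductSpace.toDual_apply_apply, ContinuousLinearMap.sub_apply,
      ContinuousLinearMap.smul_apply, ContinuousLinearMap.coe_comp', Function.comp_apply,
      ContinuousLinearMap.prod_apply, ContinuousLinearMap.coe_id', id_eq,
      fderivInnerCLM_apply, ContinuousLinearMap.sum_apply, innerSL_apply_apply,
      smul_eq_mul, inner_sub_left, sum_inner, real_inner_smul_left]
    rw [real_inner_comm v ξ]
    rw [Finset.mul_sum, Finset.mul_sum]
    congr 1
    · ring
    · refine Finset.sum_congr rfl fun i _ => ?_
      field_simp
  rw [← heq] at hfull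
  exact hasGradientAt_iff_hasFDerivAt.mpr hfull

/-- The Hopfield energy `E(ξ) = ½·⟨ξ,ξ⟩ − β⁻¹·log(∑ᵢ exp(β·⟨xᵢ,ξ⟩)) + c` is
differentiable, its gradient is `∇E(ξ) = ξ − ∑ᵢ softmax(β·Xᵀξ)ᵢ • xᵢ`, and hence
one gradient-descent step with step size 1 gives the Hopfield update rule
`ξ − ∇E(ξ) = ∑ᵢ softmax(β·Xᵀξ)ᵢ • xᵢ`. -/
theorem hopfield_energy_gradient_and_update
    (N d : ℕ) (hN : 1 ≤ N) (β : ℝ) (hβ : 0 < β) (c : ℝ)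
    (x : Fin N → EuclideanSpace ℝ (Fin d))
    (E : EuclideanSpace ℝ (Fin d) → ℝ)
    (hE : E = fun ξ =>
      (1 / 2) * ⟪ξ, ξ⟫ - β⁻¹ * Real.log (∑ i, Real.exp (β * ⟪x i, ξ⟫)) + c) :
    Differentiable ℝ E ∧
      (∀ ξ : EuclideanSpace ℝ (Fin d),
        gradient E ξ =
          ξ - ∑ i, (Real.exp (β * ⟪x i, ξ⟫) /
            ∑ m, Real.exp (β * ⟪x m, ξ⟫)) • x i) ∧
      (∀ ξ : EuclideanSpace ℝ (Fin d),
        ξ - gradient E ξ =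
          ∑ i, (Real.exp (β * ⟪x i, ξ⟫) /
            ∑ m, Real.exp (β * ⟪x m, ξ⟫)) • x i) := by
  subst hE
  have key := hopfield_key N d hN β hβ x c
  refine ⟨fun ξ => (key ξ).differentiableAt, fun ξ => (key ξ).gradient, fun ξ => ?_⟩
  rw [(key ξ).gradient, sub_sub_cancel]
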